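/- Let Θ be a finite set, let p be a probability distribution on Θ × D₁ × ⋯ × Dₙ such that D₁,…,Dₙ are conditionally independent given θ, and assume p(θ) > 0 for all θ. Then for any datasets (D₁,…,Dₙ) and (D₁',…,Dₙ') with positive probability, if p(θ|Dᵢ) = p(θ|Dᵢ') for all i and all θ, then p(θ|D₁,…,Dₙ) = p(θ|D₁',…,Dₙ') for all θ. -/

import Mathlib

/-- If datasets are conditionally independent given θ (finite Θ, finite
dataset spaces, positive prior), and two tuples of datasets (with positive probability)
induce the same individual posteriors, then they induce the same joint posterior. -/
theorem stmt0
    {Θ : Type*} [Fintype Θ] {n : ℕ} {D : Fin n → Type*} [∀ i, Fintype (D i)]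
    [∀ i, DecidableEq (D i)]
    (p : Θ → (∀ i, D i) → ℝ)
    (hp_nonneg : ∀ θ d, 0 ≤ p θ d)
    (hp_sum : ∑ θ : Θ, ∑ d : ∀ i, D i, p θ d = 1)
    -- positive prior
    (hprior : ∀ θ : Θ, 0 < ∑ d : ∀ i, D i, p θ d)
    -- conditional independence: p(D₁,…,Dₙ | θ) = ∏ᵢ p(Dᵢ | θ)
    (hci : ∀ θ d, p θ d / (∑ d' : ∀ i, D i, p θ d')
        = ∏ i : Fin n,
            (∑ d' : ∀ i, D i, if d' i = d i then p θ d' else 0)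
              / (∑ d' : ∀ i, D i, p θ d'))
    (d d' : ∀ i, D i)
    (hd : 0 < ∑ θ : Θ, p θ d) (hd' : 0 < ∑ θ : Θ, p θ d')
    -- each individual dataset has positive probability
    (hdi : ∀ i, 0 < ∑ θ : Θ, ∑ d'' : ∀ i, D i, if d'' i = d i then p θ d'' else 0)
    (hdi' : ∀ i, 0 < ∑ θ : Θ, ∑ d'' : ∀ i, D i, if d'' i = d' i then p θ d'' else 0)
    -- equal individual posteriors: p(θ | Dᵢ) = p(θ | Dᵢ') for all i, θ
    (hpost : ∀ (i : Fin n) (θ : Θ),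
        (∑ d'' : ∀ i, D i, if d'' i = d i then p θ d'' else 0)
            / (∑ θ' : Θ, ∑ d'' : ∀ i, D i, if d'' i = d i then p θ' d'' else 0)
        = (∑ d'' : ∀ i, D i, if d'' i = d' i then p θ d'' else 0)
            / (∑ θ' : Θ, ∑ d'' : ∀ i, D i, if d'' i = d' i then p θ' d'' else 0)) :
    ∀ θ : Θ, p θ d / (∑ θ' : Θ, p θ' d) = p θ d' / (∑ θ' : Θ, p θ' d') := by

  -- Notation
  set π : Θ → ℝ := fun θ => ∑ dd : ∀ i, D i, p θ dd with hπ
  have hπpos : ∀ θ, 0 < π θ := hprior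
  set m : Fin n → Θ → (∀ i, D i) → ℝ :=
    fun i θ x => ∑ d'' : ∀ i, D i, if d'' i = x i then p θ d'' else 0 with hm
  set Z : Fin n → ℝ := fun i => ∑ θ : Θ, m i θ d with hZ
  set Z' : Fin n → ℝ := fun i => ∑ θ : Θ, m i θ d' with hZ'
  have hZpos : ∀ i, 0 < Z i := hdi
  have hZ'pos : ∀ i, 0 < Z' i := hdi'
  -- from hpost: m i θ d = (Z i / Z' i) * m i θ d'
  have hkey : ∀ i θ, m i θ d = (Z i / Z' i) * m i θ d' := by
    intro i θ
    have h : m i θ d / Z i = m i θ d' / Z' i := hpost i θ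
    rw [div_eq_div_iff (ne_of_gt (hZpos i)) (ne_of_gt (hZ'pos i))] at h
    rw [div_mul_eq_mul_div, eq_div_iff (ne_of_gt (hZ'pos i))]
    linarith [h]
  -- scaling constant
  set C : ℝ := ∏ i : Fin n, Z i / Z' i with hC
  have hCpos : 0 < C := Finset.prod_pos (fun i _ => div_pos (hZpos i) (hZ'pos i))
  -- p θ d = C * p θ d'
  have hscale : ∀ θ, p θ d = C * p θ d' := by
    intro θ
    have h1 := hci θ d
    have h2 := hci θ d'
    have hπne : π θ ≠ 0 := ne_of_gt (hπpos θ)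
    have e1 : p θ d = π θ * ∏ i : Fin n, m i θ d / π θ := by
      rw [← h1]; field_simp; exact (mul_div_cancel_right₀ _ hπne).symm
    have e2 : p θ d' = π θ * ∏ i : Fin n, m i θ d' / π θ := by
      rw [← h2]; field_simp; exact (mul_div_cancel_right₀ _ hπne).symm
    rw [e1, e2]
    have : ∏ i : Fin n, m i θ d / π θ
        = C * ∏ i : Fin n, m i θ d' / π θ := by
      rw [hC, ← Finset.prod_mul_distrib]
      apply Finset.prod_congr rfl
      intro i _
      rw [hkey i θ]; ring
    rw [this]; ring
  have hsum : (∑ θ' : Θ, p θ' d) = C * ∑ θ' : Θ, p θ' d' := by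
    rw [Finset.mul_sum]; exact Finset.sum_congr rfl fun θ' _ => hscale θ'
  intro θ
  rw [hscale θ, hsum, mul_div_mul_left _ _ (ne_of_gt hCpos)]
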